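/- Let S be a nonempty set, A a C*-algebra, and L : S × S → A a positive definite kernel. Then the Cauchy–Schwarz inequality L(s,t) L(t,s) ≤ ‖L(t,t)‖ · L(s,s) holds for all s,t ∈ S, where ‖·‖ is the C*-norm of A and the right-hand side is the real scalar multiple of L(s,s). -/

import Mathlib

/-- A kernel `K : S × S → A` is hermitian if `K (t, s) = K (s, t)*` for all `s, t`. -/
def IsHermitianKernel {S A : Type*} [Star A] (K : S → S → A) : Prop :=
  ∀ s t, K t s = star (K s t)

/-- A kernel `L` with values in a C*-algebra is positive definite if for every `n ≥ 1`,
all `s₁, …, sₙ ∈ S` and all `a₁, …, aₙ ∈ A` one has `∑ᵢⱼ aᵢ* L(sᵢ, sⱼ) aⱼ ≥ 0`. -/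
def IsPosDefKernel {S A : Type*} [NonUnitalCStarAlgebra A] [PartialOrder A]
    (L : S → S → A) : Prop :=
  ∀ (n : ℕ) (s : Fin n → S) (a : Fin n → A),
    0 ≤ ∑ i, ∑ j, star (a i) * L (s i) (s j) * a j

/-- If all conjugates `a* x a` of a selfadjoint element `x` are nonnegative, then `x` is
nonnegative. -/
lemma aux_nonneg_of_forall_conjugate_nonneg {A : Type*} [NonUnitalCStarAlgebra A]
    [PartialOrder A] [StarOrderedRing A] (x : A) (hx : IsSelfAdjoint x)
    (h : ∀ a : A, 0 ≤ star a * x * a) : 0 ≤ x := by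
  rw [← CFC.negPart_eq_zero_iff x hx]
  set z := x⁻ with hz
  have hzn : 0 ≤ z := CFC.negPart_nonneg x
  have hzs : star z = z := (IsSelfAdjoint.of_nonneg hzn).star_eq
  have h3 : z * z * z = 0 := by
    have h1 : z * x * z = -(z * z * z) := by
      conv_lhs => rw [← CFC.posPart_sub_negPart x hx]
      rw [mul_sub, sub_mul, hz, CFC.negPart_mul_posPart, zero_mul, zero_sub]
    have h2 : 0 ≤ -(z * z * z) := h1 ▸ (by simpa [hzs] using h z)
    have h4 : 0 ≤ z * z * z := by simpa [hzs] using star_left_conjugate_nonneg hzn z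
    exact le_antisymm (by simpa using neg_nonneg.mp (by simpa using h2)) h4 |>.symm ▸ rfl
  have h5 : (z * z) * (z * z) = 0 := by
    rw [mul_assoc, ← mul_assoc z z z, h3, mul_zero]
  have h6 : z * z = 0 := by
    have hn : ‖z * z‖ * ‖z * z‖ = 0 := by
      rw [← CStarRing.norm_star_mul_self, star_mul, hzs, h5, norm_zero]
    exact norm_eq_zero.mp (mul_self_eq_zero.mp hn)
  have hn : ‖z‖ * ‖z‖ = 0 := by
    rw [← CStarRing.norm_star_mul_self, hzs, h6, norm_zero]
  exact norm_eq_zero.mp (mul_self_eq_zero.mp hn)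

/-- Cauchy–Schwarz inequality for positive definite kernels with values in a C*-algebra:
`L(s,t) L(t,s) ≤ ‖L(t,t)‖ • L(s,s)`. -/
theorem posDefKernel_cauchy_schwarz {S A : Type*} [Nonempty S]
    [NonUnitalCStarAlgebra A] [PartialOrder A] [StarOrderedRing A]
    (L : S → S → A) (hL : IsHermitianKernel L) (hLpd : IsPosDefKernel L) :
    ∀ s t, L s t * L t s ≤ ‖L t t‖ • L s s := by
  intro s t
  have hst : L s t = star (L t s) := hL t s
  set c := L t s with hc
  set T := L t t with hT
  set P := L s s with hP
  have hTsa : IsSelfAdjoint T := (hL t t).symm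
  have hPsa : IsSelfAdjoint P := (hL s s).symm
  have key : ∀ a b : A, 0 ≤ star a * P * a + star a * star c * b
      + (star b * c * a + star b * T * b) := by
    intro a b
    have h2 := hLpd 2 ![s, t] ![a, b]
    simpa [Fin.sum_univ_two, hst] using h2
  have main : ∀ r : ℝ, ‖T‖ ≤ r → 0 < r → star c * c ≤ r • P := by
    intro r hrT hr
    have hq : ∀ a : A, 0 ≤ star a * (r • P - star c * c) * a := by
      intro a
      have hkey := key a ((-r⁻¹) • (c * a))
      have e2 : star a * star c * ((-r⁻¹) • (c * a))
          = (-r⁻¹) • (star a * (star c * c) * a) := by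
        simp [mul_smul_comm, mul_assoc]
      have e3 : star ((-r⁻¹) • (c * a)) * c * a
          = (-r⁻¹) • (star a * (star c * c) * a) := by
        simp [smul_mul_assoc, star_smul, star_mul, mul_assoc]
      have e4 : star ((-r⁻¹) • (c * a)) * T * ((-r⁻¹) • (c * a))
          = (r⁻¹ * r⁻¹) • (star a * (star c * T * c) * a) := by
        simp [smul_mul_assoc, mul_smul_comm, star_smul, star_mul, mul_assoc, smul_smul]
      rw [e2, e3, e4] at hkey
      set q := star a * (star c * c) * a with hqdef
      set u := star a * (star c * T * c) * a with hudef
      set w := star a * P * a with hwdef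
      have hq0 : 0 ≤ q := star_left_conjugate_nonneg (star_mul_self_nonneg c) a
      have hu : u ≤ r • q := by
        calc u ≤ star a * (‖T‖ • (star c * c)) * a :=
              star_left_conjugate_le_conjugate (CStarAlgebra.star_left_conjugate_le_norm_smul hTsa) a
          _ = ‖T‖ • q := by rw [hqdef]; simp [mul_smul_comm, smul_mul_assoc]
          _ ≤ r • q := by
              have : (0 : A) ≤ (r - ‖T‖) • q := smul_nonneg (by linarith) hq0
              have := add_le_add_left this (‖T‖ • q)
              simpa [sub_smul] using this
      have step : 0 ≤ w - r⁻¹ • q := by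
        have h1 : w + (-r⁻¹) • q + ((-r⁻¹) • q + (r⁻¹ * r⁻¹) • u)
            ≤ w + (-r⁻¹) • q + ((-r⁻¹) • q + (r⁻¹ * r⁻¹) • (r • q)) := by
          have := smul_le_smul_of_nonneg_left hu (by positivity : (0:ℝ) ≤ r⁻¹ * r⁻¹)
          exact add_le_add_right (add_le_add_right this _) _
        have heq : w + (-r⁻¹) • q + ((-r⁻¹) • q + (r⁻¹ * r⁻¹) • (r • q))
            = w - r⁻¹ • q := by
          rw [smul_smul]
          have hrr : r⁻¹ * r⁻¹ * r = r⁻¹ := by field_simp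
          rw [hrr]
          module
        calc (0 : A) ≤ _ := hkey
          _ ≤ _ := h1
          _ = w - r⁻¹ • q := heq
      have final : (0 : A) ≤ r • w - q := by
        have := smul_le_smul_of_nonneg_left step hr.le
        rw [smul_sub, smul_smul, mul_inv_cancel₀ hr.ne', one_smul, smul_zero] at this
        exact this
      have hexp : star a * (r • P - star c * c) * a = r • w - q := by
        rw [hqdef, hwdef]
        simp [mul_sub, sub_mul, mul_smul_comm, smul_mul_assoc, mul_assoc]
      rw [hexp]
      exact final
    have hx : IsSelfAdjoint (r • P - star c * c) := by
      rw [IsSelfAdjoint, star_sub, star_smul, star_trivial, hPsa.star_eq, star_mul, star_star]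
    have := aux_nonneg_of_forall_conjugate_nonneg _ hx hq
    exact sub_nonneg.mp this
  have lim : Filter.Tendsto (fun n : ℕ => (‖T‖ + ((n : ℝ) + 1)⁻¹) • P)
      Filter.atTop (nhds (‖T‖ • P)) := by
    have h1 : Filter.Tendsto (fun n : ℕ => ‖T‖ + ((n : ℝ) + 1)⁻¹)
        Filter.atTop (nhds (‖T‖)) := by
      have := tendsto_one_div_add_atTop_nhds_zero_nat (𝕜 := ℝ)
      simpa [one_div] using Filter.Tendsto.add
        (tendsto_const_nhds : Filter.Tendsto (fun _ : ℕ => ‖T‖) Filter.atTop (nhds ‖T‖)) this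
    exact h1.smul_const P
  rw [hst]
  refine ge_of_tendsto' lim fun n => main _ ?_ ?_
  · have : (0 : ℝ) < ((n : ℝ) + 1)⁻¹ := by positivity
    linarith
  · positivity
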